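/- arXiv:1512.05323 — 2 statements merged into one kernel-verified Lean document; each statement's English description precedes it below -/
import Mathlib

section
/- Asymptotic tail condition implies the tail condition (Lemma AsympTail): If condition (D) holds and moreover lim_{M→∞} lim_{R→∞} limsup_{N→∞} a_N^{-1} log E_{P^N}[e^{a_N φ⁺_R(ξ_N)} 1{φ⁺_R(ξ_N) ≥ M}] ≤ S*, then the tail condition (E) holds. -/
open MeasureTheory Filter Topology
open scoped ENNReal NNReal

noncomputable section

namespace PaperVaradhan

variable {X : Type*}

/-- The topological support of a measure: the set of points all of whose open
neighbourhoods have positive measure. -/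
def measSupport [TopologicalSpace X] [MeasurableSpace X] (μ : Measure X) : Set X :=
  {x | ∀ U : Set X, IsOpen U → x ∈ U → 0 < μ U}

/-- `supp{ξ_N}`: the union over `N` of the topological supports of the laws `P N`. -/
def suppAll [TopologicalSpace X] [MeasurableSpace X] (P : ℕ → Measure X) : Set X :=
  ⋃ N, measSupport (P N)

/-- `a_N⁻¹ · log v`, as an extended real number (`log` taken in `[-∞,∞]`). -/
def nlog (a : ℕ → ℝ) (N : ℕ) (v : ℝ≥0∞) : EReal :=
  (((a N)⁻¹ : ℝ) : EReal) * ENNReal.log v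

/-- The normalized logarithmic moment `a_N⁻¹ log E_{P^N}[e^{a_N ψ} 1_A]`. -/
def lexp [MeasurableSpace X] (P : ℕ → Measure X) (a : ℕ → ℝ) (ψ : X → EReal)
    (A : Set X) (N : ℕ) : EReal :=
  nlog a N (∫⁻ x in A, EReal.exp ((a N : EReal) * ψ x) ∂(P N))

/-- The large deviation lower bound with speed `a_N` and rate function `I`. -/
def LDPLowerBound [TopologicalSpace X] [MeasurableSpace X]
    (P : ℕ → Measure X) (a : ℕ → ℝ) (I : X → ℝ≥0∞) : Prop :=
  ∀ G : Set X, IsOpen G →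
    -(⨅ x ∈ G, (I x : EReal)) ≤ liminf (fun N => nlog a N (P N G)) atTop

/-- The large deviation upper bound with speed `a_N` and rate function `I`. -/
def LDPUpperBound [TopologicalSpace X] [MeasurableSpace X]
    (P : ℕ → Measure X) (a : ℕ → ℝ) (I : X → ℝ≥0∞) : Prop :=
  ∀ F : Set X, IsClosed F →
    limsup (fun N => nlog a N (P N F)) atTop ≤ -(⨅ x ∈ F, (I x : EReal))

/-- A good rate function: lower semicontinuous with compact sublevel sets. -/
def GoodRateFunction [TopologicalSpace X] (I : X → ℝ≥0∞) : Prop :=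
  LowerSemicontinuous I ∧ ∀ c : ℝ≥0∞, c ≠ ⊤ → IsCompact {x | I x ≤ c}

/-- `S* = sup { φ(x) - I(x) : x ∈ X, I(x) < ∞ }`. -/
def Sstar (φ : X → EReal) (I : X → ℝ≥0∞) : EReal :=
  ⨆ (x : X) (_ : I x ≠ ⊤), (φ x - (I x : EReal))

/-- Condition (A): the family `φm = (φ⁻_R)` approximates `φ` from below near every
point of finite rate. -/
def CondA [TopologicalSpace X] [MeasurableSpace X]
    (P : ℕ → Measure X) (φ : X → EReal) (I : X → ℝ≥0∞) (φm : ℝ → X → EReal) : Prop :=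
  ∀ x : X, I x ≠ ⊤ → ∀ δ : ℝ, 0 < δ →
    ∃ Rstar : ℝ, 0 < Rstar ∧ ∀ R : ℝ, Rstar < R →
      ∃ U : Set X, IsOpen U ∧ x ∈ U ∧
        ∀ y ∈ U ∩ suppAll P, φ x - (δ : EReal) ≤ φm R y

/-- Condition (B): the family `φp = (φ⁺_R)` approximates `max(S*, φ)` from above near
every point of finite rate, uniformly for all large `R`. -/
def CondB [TopologicalSpace X] [MeasurableSpace X]
    (P : ℕ → Measure X) (φ : X → EReal) (I : X → ℝ≥0∞) (φp : ℝ → X → EReal) : Prop :=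
  ∃ Rstar : ℝ, 0 < Rstar ∧ ∀ R : ℝ, Rstar < R →
    ∀ x : X, I x ≠ ⊤ → ∀ δ : ℝ, 0 < δ →
      ∃ U : Set X, IsOpen U ∧ x ∈ U ∧
        ∀ y ∈ U ∩ suppAll P, φp R y ≤ max (Sstar φ I) (φ x) + (δ : EReal)

/-- Condition (C): restricting the integral of `e^{a_N φ⁻_R}` to the event
`{φ > φ⁻_R - ε}` does not change the limit (in `R`) of the `liminf` (in `N`) of the
normalized logarithms. -/
def CondC [TopologicalSpace X] [MeasurableSpace X] (P : ℕ → Measure X) (a : ℕ → ℝ)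
    (φ : X → EReal) (φm : ℝ → X → EReal) : Prop :=
  ∀ ε : ℝ, 0 < ε → ∃ L : EReal,
    Tendsto (fun R : ℝ =>
        liminf (fun N => lexp P a (φm R) {y | φm R y - (ε : EReal) < φ y} N) atTop)
      atTop (𝓝 L) ∧
    Tendsto (fun R : ℝ =>
        liminf (fun N => lexp P a (φm R) Set.univ N) atTop)
      atTop (𝓝 L)

/-- Condition (D): the contribution of the event `{φ > φ⁺_R + ε}` is bounded by `S*`. -/
def CondD [TopologicalSpace X] [MeasurableSpace X] (P : ℕ → Measure X) (a : ℕ → ℝ)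
    (φ : X → EReal) (I : X → ℝ≥0∞) (φp : ℝ → X → EReal) : Prop :=
  ∀ ε : ℝ, 0 < ε →
    limsup (fun R : ℝ =>
        limsup (fun N => lexp P a φ {y | φp R y + (ε : EReal) < φ y} N) atTop)
      atTop ≤ Sstar φ I

/-- The tail condition (E). -/
def CondE [TopologicalSpace X] [MeasurableSpace X] (P : ℕ → Measure X) (a : ℕ → ℝ)
    (φ : X → EReal) (I : X → ℝ≥0∞) : Prop :=
  limsup (fun M : ℝ =>
      limsup (fun N => lexp P a φ {y | (M : EReal) ≤ φ y} N) atTop)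
    atTop ≤ Sstar φ I



/-! ### Auxiliary lemmas -/

section Aux

lemma ereal_distrib_coe (r x : ℝ) (y : EReal) :
    (r : EReal) * ((x : EReal) + y) = ((r * x : ℝ) : EReal) + (r : EReal) * y := by
  induction y using EReal.rec with
  | bot =>
    rcases lt_trichotomy r 0 with hr | hr | hr
    · rw [EReal.add_bot, EReal.coe_mul_bot_of_neg hr, EReal.coe_add_top]
    · simp [hr]
    · simp [EReal.coe_mul_bot_of_pos hr, EReal.add_bot]
  | coe y => norm_cast; ring
  | top =>
    rcases lt_trichotomy r 0 with hr | hr | hr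
    · simp [EReal.coe_mul_top_of_neg hr]
    · simp [hr]
    · rw [EReal.coe_add_top, EReal.coe_mul_top_of_pos hr, EReal.coe_add_top]

lemma ereal_sub_le_of_le_add {M ε : ℝ} {x : EReal} (h : (M : EReal) ≤ x + (ε : EReal)) :
    ((M - ε : ℝ) : EReal) ≤ x := by
  induction x using EReal.rec with
  | bot => simp [EReal.bot_add] at h
  | coe x =>
    norm_cast at h ⊢
    linarith
  | top => exact le_top

lemma ereal_le_of_forall_le_add {x y : EReal} (h : ∀ ε : ℝ, 0 < ε → x ≤ y + (ε : EReal)) :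
    x ≤ y := by
  induction y using EReal.rec with
  | bot => simpa [EReal.bot_add] using h 1 one_pos
  | coe y =>
    induction x using EReal.rec with
    | bot => exact bot_le
    | coe x =>
      have h' : ∀ ε : ℝ, 0 < ε → x ≤ y + ε := by
        intro ε hε
        exact_mod_cast h ε hε
      exact_mod_cast le_of_forall_pos_le_add h'
    | top =>
      exfalso
      have := h 1 one_pos
      rw [show ((y : EReal) + (1:ℝ)) = ((y + 1 : ℝ) : EReal) by norm_cast] at this
      exact (EReal.coe_ne_top _) (top_le_iff.1 this)
  | top => exact le_top

lemma ereal_coe_inv_nonneg {a : ℝ} (ha : 0 < a) : (0 : EReal) ≤ ((a⁻¹ : ℝ) : EReal) := by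
  exact_mod_cast inv_nonneg.2 ha.le

lemma nlog_mono (a : ℕ → ℝ) (N : ℕ) (ha : 0 < a N) {v w : ℝ≥0∞} (h : v ≤ w) :
    nlog a N v ≤ nlog a N w :=
  mul_le_mul_of_nonneg_left (ENNReal.log_monotone h) (ereal_coe_inv_nonneg ha)

lemma ennreal_log_two : ENNReal.log (2 : ℝ≥0∞) = ((Real.log 2 : ℝ) : EReal) := by
  rw [show (2 : ℝ≥0∞) = ENNReal.ofReal 2 by simp, ENNReal.log_ofReal_of_pos two_pos]

lemma nlog_add_le (a : ℕ → ℝ) (N : ℕ) (ha : 0 < a N) (u v : ℝ≥0∞) :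
    nlog a N (u + v) ≤
      max (nlog a N u) (nlog a N v) + (((a N)⁻¹ * Real.log 2 : ℝ) : EReal) := by
  have h2 : u + v ≤ 2 * max u v := by
    have : u + v ≤ max u v + max u v :=
      add_le_add (le_max_left _ _) (le_max_right _ _)
    simpa [two_mul] using this
  have hlog : ENNReal.log (u + v) ≤ ENNReal.log 2 + ENNReal.log (max u v) := by
    calc ENNReal.log (u + v) ≤ ENNReal.log (2 * max u v) := ENNReal.log_monotone h2
      _ = ENNReal.log 2 + ENNReal.log (max u v) := ENNReal.log_mul_add
  have hmax : ENNReal.log (max u v) = max (ENNReal.log u) (ENNReal.log v) :=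
    ENNReal.log_monotone.map_max
  have hmono : Monotone fun z : EReal => (((a N)⁻¹ : ℝ) : EReal) * z :=
    fun _ _ h' => mul_le_mul_of_nonneg_left h' (ereal_coe_inv_nonneg ha)
  calc nlog a N (u + v)
      ≤ (((a N)⁻¹ : ℝ) : EReal) * (ENNReal.log 2 + ENNReal.log (max u v)) :=
        mul_le_mul_of_nonneg_left hlog (ereal_coe_inv_nonneg ha)
    _ = (((a N)⁻¹ * Real.log 2 : ℝ) : EReal)
          + (((a N)⁻¹ : ℝ) : EReal) * ENNReal.log (max u v) := by
        rw [ennreal_log_two, ereal_distrib_coe]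
    _ = max (nlog a N u) (nlog a N v) + (((a N)⁻¹ * Real.log 2 : ℝ) : EReal) := by
        rw [add_comm, hmax, hmono.map_max]
        rfl

lemma measurable_add_econst (ε : ℝ) : Measurable fun x : EReal => x + (ε : EReal) := by
  have hmono : Monotone fun x : EReal => x + (ε : EReal) := fun _ _ h => add_le_add_left h _
  exact hmono.measurable

lemma lexp_add_const [MeasurableSpace X] (P : ℕ → Measure X) (a : ℕ → ℝ) (N : ℕ)
    (ha : 0 < a N) (ψ : X → EReal) (ε : ℝ) (A : Set X) :
    lexp P a (fun y => ψ y + (ε : EReal)) A N = (ε : EReal) + lexp P a ψ A N := by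
  unfold lexp nlog
  have hpt : ∀ y : X, EReal.exp ((a N : EReal) * (ψ y + (ε : EReal)))
      = EReal.exp (((a N * ε : ℝ) : EReal)) * EReal.exp ((a N : EReal) * ψ y) := by
    intro y
    rw [show (a N : EReal) * (ψ y + (ε : EReal))
        = ((a N * ε : ℝ) : EReal) + (a N : EReal) * ψ y by
      rw [add_comm (ψ y), ereal_distrib_coe]]
    exact EReal.exp_add _ _
  simp only [hpt]
  rw [lintegral_const_mul' _ _ (by simp only [ne_eq, EReal.exp_eq_top_iff]; exact EReal.coe_ne_top _)]
  rw [ENNReal.log_mul_add, EReal.log_exp, ereal_distrib_coe]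
  congr 2
  field_simp

lemma key_pointwise [TopologicalSpace X] [MeasurableSpace X] [BorelSpace X]
    (P : ℕ → Measure X) (a : ℕ → ℝ) (haPos : ∀ N, 0 < a N)
    (φ : X → EReal) (hφ : Measurable φ)
    (φp : ℝ → X → EReal) (hφp : ∀ R, Measurable (φp R))
    (ε M R : ℝ) (N : ℕ) :
    lexp P a φ {y | (M : EReal) ≤ φ y} N ≤
      max (lexp P a φ {y | φp R y + (ε : EReal) < φ y} N)
          ((ε : EReal) + lexp P a (φp R) {y | ((M - ε : ℝ) : EReal) ≤ φp R y} N)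
        + (((a N)⁻¹ * Real.log 2 : ℝ) : EReal) := by
  set A : Set X := {y | (M : EReal) ≤ φ y} with hA
  set B : Set X := {y | φp R y + (ε : EReal) < φ y} with hB
  set C : Set X := {y | ((M - ε : ℝ) : EReal) ≤ φp R y} with hC
  have hBmeas : MeasurableSet B :=
    measurableSet_lt ((measurable_add_econst ε).comp (hφp R)) hφ
  have hAmeas : MeasurableSet A := measurableSet_le measurable_const hφ
  have hint : (∫⁻ x in A, EReal.exp ((a N : EReal) * φ x) ∂(P N)) ≤
      (∫⁻ x in B, EReal.exp ((a N : EReal) * φ x) ∂(P N)) +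
      (∫⁻ x in C, EReal.exp ((a N : EReal) * (φp R x + (ε : EReal))) ∂(P N)) := by
    have hsplit : (∫⁻ x in A, EReal.exp ((a N : EReal) * φ x) ∂(P N)) ≤
        (∫⁻ x in A ∩ B, EReal.exp ((a N : EReal) * φ x) ∂(P N)) +
        (∫⁻ x in A \ B, EReal.exp ((a N : EReal) * φ x) ∂(P N)) := by
      conv_lhs => rw [← Set.inter_union_diff A B]
      exact lintegral_union_le _ _ _
    refine hsplit.trans (add_le_add ?_ ?_)
    · exact lintegral_mono_set Set.inter_subset_right
    · have h1 : (∫⁻ x in A \ B, EReal.exp ((a N : EReal) * φ x) ∂(P N)) ≤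
          (∫⁻ x in A \ B, EReal.exp ((a N : EReal) * (φp R x + (ε : EReal))) ∂(P N)) := by
        refine setLIntegral_mono' (hAmeas.diff hBmeas) fun x hx => ?_
        have hle : φ x ≤ φp R x + (ε : EReal) := not_lt.1 hx.2
        exact EReal.exp_monotone
          (mul_le_mul_of_nonneg_left hle (by exact_mod_cast (haPos N).le))
      refine h1.trans (lintegral_mono_set fun x hx => ?_)
      have hMx : (M : EReal) ≤ φ x := hx.1
      have hle : φ x ≤ φp R x + (ε : EReal) := not_lt.1 hx.2
      exact ereal_sub_le_of_le_add (hMx.trans hle)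
  have step1 : lexp P a φ A N ≤
      nlog a N ((∫⁻ x in B, EReal.exp ((a N : EReal) * φ x) ∂(P N)) +
        (∫⁻ x in C, EReal.exp ((a N : EReal) * (φp R x + (ε : EReal))) ∂(P N))) :=
    nlog_mono a N (haPos N) hint
  refine step1.trans ((nlog_add_le a N (haPos N) _ _).trans ?_)
  refine add_le_add_left (max_le_max le_rfl ?_) _
  have : nlog a N (∫⁻ x in C, EReal.exp ((a N : EReal) * (φp R x + (ε : EReal))) ∂(P N))
      = lexp P a (fun y => φp R y + (ε : EReal)) C N := rfl
  rw [this, lexp_add_const P a N (haPos N) (φp R) ε C]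

lemma limsup_add_tendsto_zero_le {u : ℕ → EReal} {c : ℕ → ℝ}
    (hc : Tendsto c atTop (𝓝 0)) :
    limsup (fun N => u N + ((c N : ℝ) : EReal)) atTop ≤ limsup u atTop := by
  have hc' : Tendsto (fun N => ((c N : ℝ) : EReal)) atTop (𝓝 (0 : EReal)) := by
    rw [show (0 : EReal) = ((0 : ℝ) : EReal) by norm_cast]
    exact (continuous_coe_real_ereal.tendsto _).comp hc
  have hlim : limsup (fun N => ((c N : ℝ) : EReal)) atTop = 0 := hc'.limsup_eq
  have := EReal.limsup_add_le (u := u) (v := fun N => ((c N : ℝ) : EReal)) (f := atTop)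
    (Or.inr (by rw [hlim]; simp))
    (Or.inr (by rw [hlim]; simp))
  rw [hlim, add_zero] at this
  exact this

lemma limsup_const_add_le {α : Type*} {f : Filter α} [f.NeBot] (ε : ℝ) (g : α → EReal) :
    limsup (fun i => (ε : EReal) + g i) f ≤ (ε : EReal) + limsup g f := by
  have h := EReal.limsup_add_le (u := fun _ : α => (ε : EReal)) (v := g) (f := f)
    (Or.inl (by rw [limsup_const]; exact EReal.coe_ne_bot ε))
    (Or.inl (by rw [limsup_const]; exact EReal.coe_ne_top ε))
  rw [limsup_const] at h
  exact h

end Aux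

/-- **Asymptotic tail condition implies the tail condition** (Lemma `AsympTail`).
If condition (D) holds and moreover
`lim_{M→∞} lim_{R→∞} limsup_{N→∞} a_N⁻¹ log E_{P^N}[e^{a_N φ⁺_R(ξ_N)} 1{φ⁺_R(ξ_N) ≥ M}] ≤ S*`,
then the tail condition (E) holds. -/
theorem condE_of_condD_of_asymptotic_tail
    [TopologicalSpace X] [RegularSpace X] [MeasurableSpace X] [BorelSpace X]
    (P : ℕ → Measure X) (hP : ∀ N, IsProbabilityMeasure (P N))
    (a : ℕ → ℝ) (haPos : ∀ N, 0 < a N) (haTop : Tendsto a atTop atTop)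
    (I : X → ℝ≥0∞)
    (φ : X → EReal) (hφ : Measurable φ)
    (φp : ℝ → X → EReal) (hφp : ∀ R, Measurable (φp R))
    (hD : CondD P a φ I φp)
    (hTail : limsup (fun M : ℝ =>
        limsup (fun R : ℝ =>
            limsup (fun N => lexp P a (φp R) {y | (M : EReal) ≤ φp R y} N) atTop)
          atTop) atTop ≤ Sstar φ I) :
    CondE P a φ I := by
  unfold CondE
  refine ereal_le_of_forall_le_add fun ε hε => ?_
  set S : EReal := Sstar φ I with hSdef
  set hM : ℝ → EReal :=
    fun M => limsup (fun N => lexp P a φ {y | (M : EReal) ≤ φ y} N) atTop with hhM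
  set F : ℝ → EReal :=
    fun R => limsup (fun N => lexp P a φ {y | φp R y + (ε : EReal) < φ y} N) atTop with hF
  set T : ℝ → EReal := fun M =>
    limsup (fun R : ℝ =>
      limsup (fun N => lexp P a (φp R) {y | (M : EReal) ≤ φp R y} N) atTop) atTop with hT
  have hc0 : Tendsto (fun N => (a N)⁻¹ * Real.log 2) atTop (𝓝 0) := by
    simpa using haTop.inv_tendsto_atTop.mul_const (Real.log 2)
  have key : ∀ M : ℝ, hM M ≤ max S ((ε : EReal) + T (M - ε)) := by
    intro M
    have hMR : ∀ R : ℝ, hM M ≤ max (F R)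
        ((ε : EReal) + limsup (fun N =>
          lexp P a (φp R) {y | ((M - ε : ℝ) : EReal) ≤ φp R y} N) atTop) := by
      intro R
      have h1 : hM M ≤ limsup (fun N =>
          max (lexp P a φ {y | φp R y + (ε : EReal) < φ y} N)
            ((ε : EReal) + lexp P a (φp R) {y | ((M - ε : ℝ) : EReal) ≤ φp R y} N)
          + (((a N)⁻¹ * Real.log 2 : ℝ) : EReal)) atTop :=
        limsup_le_limsup (Eventually.of_forall fun N =>
          key_pointwise P a haPos φ hφ φp hφp ε M R N)
      refine h1.trans ((limsup_add_tendsto_zero_le hc0).trans ?_)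
      rw [limsup_max]
      exact max_le_max le_rfl (limsup_const_add_le ε _)
    have h2 : hM M ≤ limsup (fun R : ℝ => max (F R)
        ((ε : EReal) + limsup (fun N =>
          lexp P a (φp R) {y | ((M - ε : ℝ) : EReal) ≤ φp R y} N) atTop)) atTop := by
      calc hM M = limsup (fun _ : ℝ => hM M) atTop := (limsup_const _).symm
        _ ≤ _ := limsup_le_limsup (Eventually.of_forall hMR)
    rw [limsup_max] at h2
    refine h2.trans (max_le_max (hD ε hε) ?_)
    exact limsup_const_add_le ε _
  have h3 : limsup hM atTop ≤
      limsup (fun M : ℝ => max S ((ε : EReal) + T (M - ε))) atTop :=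
    limsup_le_limsup (Eventually.of_forall key)
  rw [limsup_max (u := fun _ : ℝ => S) (v := fun M : ℝ => (ε : EReal) + T (M - ε)),
    limsup_const] at h3
  have h5 : limsup (fun M : ℝ => T (M - ε)) atTop = limsup T atTop := by
    have hcomp : (fun M : ℝ => T (M - ε)) = T ∘ fun M : ℝ => M + (-ε) := by
      funext M; simp [Function.comp, sub_eq_add_neg]
    have hmap : map (fun M : ℝ => M + (-ε)) atTop = atTop := by
      exact (OrderIso.addRight (-ε : ℝ)).map_atTop
    rw [hcomp, limsup_comp, hmap]
  have h6 : limsup (fun M : ℝ => (ε : EReal) + T (M - ε)) atTop ≤ (ε : EReal) + S := by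
    refine (limsup_const_add_le ε _).trans (add_le_add_right ?_ _)
    rw [h5]
    exact hTail
  have h7 : limsup hM atTop ≤ max S ((ε : EReal) + S) := h3.trans (max_le_max le_rfl h6)
  rw [max_eq_right (le_add_of_nonneg_left (by exact_mod_cast hε.le)), add_comm] at h7
  exact h7

end PaperVaradhan
end
end

section
/- Continuity of the marginal-flow map Π (Lemma MapPi::Cont): The map Π : M₁(T^d × W × C([0,T],ℝ)) → 𝒞 = C([0,T], M₁(T^d×W×ℝ)) is continuous, where M₁(T^d × W × C([0,T],ℝ)) carries the topology of weak convergence and 𝒞 the topology of uniform convergence. Equivalently, if Q^(n) → Q weakly in M₁(T^d × W × C([0,T],ℝ)), then for every bounded Lipschitz continuous f : T^d × W × ℝ → ℝ, sup_{t∈[0,T]} | ∫ f d(Π(Q^(n))_t) − ∫ f d(Π(Q)_t) | → 0 as n → ∞, i.e. Π(Q^(n))_t → Π(Q)_t weakly, uniformly in t ∈ [0,T]. -/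
open MeasureTheory Filter Topology
open scoped ENNReal NNReal Classical BoundedContinuousFunction

noncomputable section

set_option synthInstance.maxSize 1000
set_option synthInstance.maxHeartbeats 1000000
set_option maxHeartbeats 1000000

namespace PaperPath

/-- The `d`-dimensional torus `T^d = ℝ^d/ℤ^d`. -/
abbrev Td (d : ℕ) : Type := Fin d → UnitAddCircle

/-- The path space `C([0,T], ℝ)` of continuous real-valued paths, with the topology of
uniform convergence (the compact-open topology). -/
abbrev PathSp (T : ℝ) : Type := C(↥(Set.Icc (0 : ℝ) T), ℝ)

/-- The Borel σ-algebra on the path space. -/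
instance (T : ℝ) : MeasurableSpace (PathSp T) := borel _

instance (T : ℝ) : BorelSpace (PathSp T) := ⟨rfl⟩

/-- The projection of `A ⊆ T^d × W × C([0,T],ℝ)` onto the path component. -/
def ProjC {d m : ℕ} {W : Set (EuclideanSpace ℝ (Fin m))} {T : ℝ}
    (A : Set (Td d × ↥W × PathSp T)) : Set (PathSp T) :=
  {θ | ∃ x w, (x, w, θ) ∈ A}

/-- The projection of `A ⊆ T^d × W × C([0,T],ℝ)` onto the environment component. -/
def ProjW {d m : ℕ} {W : Set (EuclideanSpace ℝ (Fin m))} {T : ℝ}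
    (A : Set (Td d × ↥W × PathSp T)) : Set ↥W :=
  {w | ∃ x θ, (x, w, θ) ∈ A}

/-- The evaluation map `(x, w, θ_{[0,T]}) ↦ (x, w, θ_t)` is measurable. -/
lemma measurable_eval {d m : ℕ} (W : Set (EuclideanSpace ℝ (Fin m))) (T : ℝ)
    (t : ↥(Set.Icc (0 : ℝ) T)) :
    Measurable fun p : Td d × ↥W × PathSp T => (p.1, p.2.1, p.2.2 t) :=
  measurable_fst.prodMk (measurable_snd.fst.prodMk
    (((ContinuousEvalConst.continuous_eval_const t).measurable).comp measurable_snd.snd))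

/-- `Π(Q)_t`: the one-dimensional (time-`t`) marginal of `Q`, i.e. the pushforward of
`Q ∈ M₁(T^d × W × C([0,T],ℝ))` under the evaluation map `(x,w,θ) ↦ (x,w,θ_t)`. -/
def piMapAt {d m : ℕ} (W : Set (EuclideanSpace ℝ (Fin m))) (T : ℝ)
    (Q : ProbabilityMeasure (Td d × ↥W × PathSp T)) (t : ↥(Set.Icc (0 : ℝ) T)) :
    ProbabilityMeasure (Td d × ↥W × ℝ) :=
  Q.map (measurable_eval W T t).aemeasurable

/-- Tightness of a single probability measure on a Polish space. -/
lemma tight_aux {X : Type*} [MetricSpace X] [CompleteSpace X]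
    [SecondCountableTopology X] [MeasurableSpace X] [OpensMeasurableSpace X]
    (μ : Measure X) [IsProbabilityMeasure μ] {ε : ℝ≥0∞} (h0 : 0 < ε) (htop : ε ≠ ∞) :
    ∃ K : Set X, IsCompact K ∧ μ Kᶜ < ε := by
  cases isEmpty_or_nonempty X with
  | inl h =>
    exfalso
    have h1 : μ Set.univ = 1 := measure_univ
    rw [Set.univ_eq_empty_iff.mpr h, measure_empty] at h1
    exact zero_ne_one h1
  | inr h =>
    obtain ⟨u, hu⟩ := TopologicalSpace.exists_dense_seq X
    set δ : ℕ → ℝ≥0∞ := fun k => ε / 4 * (2⁻¹ : ℝ≥0∞) ^ k with hδ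
    have hδpos : ∀ k, 0 < δ k := by
      intro k
      refine ENNReal.mul_pos ?_ ?_
      · exact (ENNReal.div_pos h0.ne' (by norm_num)).ne'
      · exact (ENNReal.pow_ne_zero (by norm_num) k)
    have main : ∀ k : ℕ, ∃ N : ℕ,
        μ (Set.accumulate (fun i => Metric.closedBall (u i) (1 / (k + 1))) N)ᶜ < δ k := by
      intro k
      set s : ℕ → Set X := fun i => Metric.closedBall (u i) (1 / (k + 1)) with hs
      have hcover : (⋃ i, s i) = Set.univ := by
        apply Set.eq_univ_of_forall
        intro x
        have : (1 : ℝ) / (k + 1) > 0 := by positivity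
        obtain ⟨i, hi⟩ := (Metric.denseRange_iff.mp hu) x _ this
        exact Set.mem_iUnion.2 ⟨i, Metric.mem_closedBall.2 (by exact (dist_comm x (u i) ▸ hi.le))⟩
      have htends : Tendsto (fun N => μ (Set.accumulate s N)) atTop (𝓝 (μ Set.univ)) := by
        have := tendsto_measure_iUnion_accumulate (μ := μ) (f := s)
        rwa [hcover] at this
      rw [measure_univ] at htends
      have hev : ∀ᶠ N in atTop, (1 : ℝ≥0∞) < μ (Set.accumulate s N) + δ k := by
        have h2 : Tendsto (fun N => μ (Set.accumulate s N) + δ k) atTop (𝓝 (1 + δ k)) :=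
          htends.add tendsto_const_nhds
        exact h2.eventually (lt_mem_nhds (ENNReal.lt_add_right ENNReal.one_ne_top (hδpos k).ne'))
      obtain ⟨N, hN⟩ := hev.exists
      refine ⟨N, ?_⟩
      have hmeasB : MeasurableSet (Set.accumulate s N) := by
        rw [Set.accumulate_def]
        exact MeasurableSet.biUnion (Set.to_countable _)
          (fun i _ => Metric.isClosed_closedBall.measurableSet)
      have hsum := measure_add_measure_compl (μ := μ) hmeasB
      rw [measure_univ] at hsum
      have : μ (Set.accumulate s N) + μ (Set.accumulate s N)ᶜ <
          μ (Set.accumulate s N) + δ k := by rw [hsum]; exact hN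
      exact lt_of_add_lt_add_left this
    choose N hN using main
    set B : ℕ → Set X := fun k =>
      Set.accumulate (fun i => Metric.closedBall (u i) (1 / (k + 1))) (N k) with hB
    have hBclosed : ∀ k, IsClosed (B k) := by
      intro k
      rw [hB]
      simp only [Set.accumulate_def]
      exact Set.Finite.isClosed_biUnion (Set.finite_Iic _) (fun i _ => Metric.isClosed_closedBall)
    refine ⟨⋂ k, B k, ?_, ?_⟩
    · apply TotallyBounded.isCompact_of_isClosed
      · rw [Metric.totallyBounded_iff]
        intro r hr
        obtain ⟨k, hk⟩ := exists_nat_one_div_lt hr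
        refine ⟨u '' Set.Iic (N k), (Set.finite_Iic _).image u, ?_⟩
        intro x hx
        have hxB : x ∈ B k := Set.mem_iInter.mp hx k
        rw [hB] at hxB
        obtain ⟨i, hi, hxi⟩ := Set.mem_accumulate.mp hxB
        exact Set.mem_biUnion (Set.mem_image_of_mem u hi)
          (Metric.mem_ball.2 (lt_of_le_of_lt (Metric.mem_closedBall.mp hxi) hk))
      · exact isClosed_iInter hBclosed
    · have hcompl : (⋂ k, B k)ᶜ = ⋃ k, (B k)ᶜ := by rw [Set.compl_iInter]
      rw [hcompl]
      calc μ (⋃ k, (B k)ᶜ) ≤ ∑' k, μ (B k)ᶜ := measure_iUnion_le _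
        _ ≤ ∑' k, δ k := ENNReal.tsum_le_tsum (fun k => (hN k).le)
        _ = ε / 4 * ∑' k, (2⁻¹ : ℝ≥0∞) ^ k := ENNReal.tsum_mul_left
        _ = ε / 4 * 2 := by rw [ENNReal.tsum_geometric, ENNReal.one_sub_inv_two, inv_inv]
        _ = ε / 2 := by
            have h42 : (4 : ℝ≥0∞)⁻¹ * 2 = 2⁻¹ := by
              have h4 : (4 : ℝ≥0∞) = 2 * 2 := by norm_num
              rw [h4, ENNReal.mul_inv (Or.inl (by norm_num)) (Or.inl ENNReal.ofNat_ne_top),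
                mul_assoc, ENNReal.inv_mul_cancel (by norm_num) ENNReal.ofNat_ne_top, mul_one]
            rw [div_eq_mul_inv, mul_assoc, h42, ← div_eq_mul_inv]
        _ < ε := ENNReal.half_lt_self h0.ne' htop

/-- A compact set of continuous functions on a compact metric space is uniformly
equicontinuous. -/
lemma equicont_aux {X : Type*} [MetricSpace X] [CompactSpace X] {Kc : Set C(X, ℝ)}
    (hK : IsCompact Kc) {δ : ℝ} (hδ : 0 < δ) :
    ∃ r > 0, ∀ θ ∈ Kc, ∀ s t : X, dist s t < r → dist (θ s) (θ t) < δ := by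
  obtain ⟨net, hnetfin, hnetsub⟩ := (Metric.totallyBounded_iff.mp hK.totallyBounded) (δ / 3)
    (by positivity)
  have hfinU : ∀ F : Finset C(X, ℝ), ∃ r > (0 : ℝ), ∀ g ∈ F, ∀ a b : X,
      dist a b < r → dist (g a) (g b) < δ / 3 := by
    intro F
    induction F using Finset.induction with
    | empty => exact ⟨1, one_pos, by simp⟩
    | @insert g F hg ih =>
      obtain ⟨r, hr, hF⟩ := ih
      have hgu : UniformContinuous g := CompactSpace.uniformContinuous_of_continuous g.continuous
      obtain ⟨rg, hrg, hgp⟩ := Metric.uniformContinuous_iff.mp hgu (δ / 3) (by positivity)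
      refine ⟨min r rg, lt_min hr hrg, ?_⟩
      intro g' hg' a b hab
      rcases Finset.mem_insert.mp hg' with h | h
      · exact h ▸ hgp (lt_of_lt_of_le hab (min_le_right _ _))
      · exact hF g' h a b (lt_of_lt_of_le hab (min_le_left _ _))
  obtain ⟨r, hr, hmod⟩ := hfinU hnetfin.toFinset
  refine ⟨r, hr, ?_⟩
  intro θ hθ s t hst
  obtain ⟨g, hgnet, hθg⟩ := Set.mem_iUnion₂.mp (hnetsub hθ)
  have hθg' : dist θ g < δ / 3 := Metric.mem_ball.mp hθg
  have h1 : dist (θ s) (g s) < δ / 3 := lt_of_le_of_lt (ContinuousMap.dist_apply_le_dist s) hθg'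
  have h2 : dist (g s) (g t) < δ / 3 := hmod g (hnetfin.mem_toFinset.mpr hgnet) s t hst
  have h3 : dist (g t) (θ t) < δ / 3 := by
    rw [dist_comm]
    exact lt_of_le_of_lt (ContinuousMap.dist_apply_le_dist t) hθg'
  calc dist (θ s) (θ t) ≤ dist (θ s) (g s) + dist (g s) (g t) + dist (g t) (θ t) :=
        dist_triangle4 _ _ _ _
    _ < δ / 3 + δ / 3 + δ / 3 := by linarith
    _ = δ := by ring

/-- **Continuity of the marginal-flow map `Π`** (Lemma `MapPi::Cont`).
If `Q^(n) → Q` weakly in `M₁(T^d × W × C([0,T],ℝ))`, then for every bounded Lipschitz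
continuous `f : T^d × W × ℝ → ℝ`, the integrals `∫ f dΠ(Q^(n))_t` converge to
`∫ f dΠ(Q)_t` uniformly in `t ∈ [0,T]`; i.e. `Π(Q^(n))_t → Π(Q)_t` weakly, uniformly in
`t`.  In other words, `Π : M₁(T^d × W × C([0,T],ℝ)) → C([0,T], M₁(T^d × W × ℝ))` is
continuous for the topology of uniform convergence on the target. -/
theorem piMap_continuous
    {d m : ℕ} (W : Set (EuclideanSpace ℝ (Fin m))) (hW : IsClosed W)
    (T : ℝ) (hT : 0 < T)
    (Qn : ℕ → ProbabilityMeasure (Td d × ↥W × PathSp T))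
    (Q : ProbabilityMeasure (Td d × ↥W × PathSp T))
    (hQn : Tendsto Qn atTop (𝓝 Q))
    (f : Td d × ↥W × ℝ → ℝ) (K : ℝ≥0) (hfL : LipschitzWith K f)
    (hfb : ∃ C : ℝ, ∀ z, |f z| ≤ C) :
    TendstoUniformly
      (fun n (t : ↥(Set.Icc (0 : ℝ) T)) =>
        ∫ z, f z ∂(piMapAt W T (Qn n) t : Measure (Td d × ↥W × ℝ)))
      (fun t => ∫ z, f z ∂(piMapAt W T Q t : Measure (Td d × ↥W × ℝ)))
      atTop := by

  classical
  obtain ⟨C, hC⟩ := hfb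
  have hfc : Continuous f := hfL.continuous
  -- rewrite the integrals as integrals over the base space
  have hrw : ∀ (P : ProbabilityMeasure (Td d × ↥W × PathSp T)) (t : ↥(Set.Icc (0 : ℝ) T)),
      ∫ z, f z ∂(piMapAt W T P t : Measure (Td d × ↥W × ℝ)) =
        ∫ p, f (p.1, p.2.1, p.2.2 t) ∂(P : Measure (Td d × ↥W × PathSp T)) := by
    intro P t
    rw [piMapAt, ProbabilityMeasure.toMeasure_map]
    exact integral_map (measurable_eval W T t).aemeasurable hfc.aestronglyMeasurable
  set H : ProbabilityMeasure (Td d × ↥W × PathSp T) → ↥(Set.Icc (0 : ℝ) T) → ℝ :=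
    fun P t => ∫ p, f (p.1, p.2.1, p.2.2 t) ∂(P : Measure (Td d × ↥W × PathSp T)) with hH
  have hfun1 : (fun n (t : ↥(Set.Icc (0 : ℝ) T)) =>
      ∫ z, f z ∂(piMapAt W T (Qn n) t : Measure (Td d × ↥W × ℝ))) = fun n t => H (Qn n) t :=
    funext fun n => funext fun t => hrw _ t
  have hfun2 : (fun t : ↥(Set.Icc (0 : ℝ) T) =>
      ∫ z, f z ∂(piMapAt W T Q t : Measure (Td d × ↥W × ℝ))) = H Q :=
    funext fun t => hrw _ t
  rw [hfun1, hfun2]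
  -- continuity/integrability of the evaluated integrands
  have hcont : ∀ t : ↥(Set.Icc (0 : ℝ) T),
      Continuous (fun p : Td d × ↥W × PathSp T => f (p.1, p.2.1, p.2.2 t)) := fun t =>
    hfc.comp (continuous_fst.prodMk (continuous_snd.fst.prodMk
      ((ContinuousEvalConst.continuous_eval_const t).comp continuous_snd.snd)))
  have hint : ∀ (P : ProbabilityMeasure (Td d × ↥W × PathSp T)) (t : ↥(Set.Icc (0 : ℝ) T)),
      Integrable (fun p : Td d × ↥W × PathSp T => f (p.1, p.2.1, p.2.2 t))
        (P : Measure (Td d × ↥W × PathSp T)) := by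
    intro P t
    exact (integrable_const C).mono' (hcont t).aestronglyMeasurable
      (Filter.Eventually.of_forall fun p => by simpa using hC _)
  -- pointwise convergence at each time
  have hptC : ∀ c : ↥(Set.Icc (0 : ℝ) T),
      Tendsto (fun n => H (Qn n) c) atTop (𝓝 (H Q c)) := by
    intro c
    set g : (Td d × ↥W × PathSp T) →ᵇ ℝ :=
      ⟨⟨fun p => f (p.1, p.2.1, p.2.2 c), hcont c⟩, ⟨2 * C, fun x y => by
        calc dist (f (x.1, x.2.1, x.2.2 c)) (f (y.1, y.2.1, y.2.2 c))
            ≤ ‖f (x.1, x.2.1, x.2.2 c)‖ + ‖f (y.1, y.2.1, y.2.2 c)‖ := dist_le_norm_add_norm _ _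
          _ ≤ C + C := add_le_add (by simpa using hC _) (by simpa using hC _)
          _ = 2 * C := by ring⟩⟩ with hg
    exact ProbabilityMeasure.tendsto_iff_forall_integral_tendsto.mp hQn g
  rw [Metric.tendstoUniformly_iff]
  intro ε hε
  -- constants
  have hCnn : 0 ≤ C := by
    obtain ⟨p0⟩ := Q.nonempty
    exact le_trans (abs_nonneg _) (hC (p0.1, p0.2.1, 0))
  set C' : ℝ := C + 1 with hC'def
  have hC'pos : 0 < C' := by linarith
  have hKpos : (0 : ℝ) < (K : ℝ) + 1 := by positivity
  set δ : ℝ := ε / (24 * ((K : ℝ) + 1)) with hδdef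
  have hδpos : 0 < δ := by positivity
  set ε' : ℝ := min (ε / (32 * C')) 4⁻¹ with hε'def
  have hε'pos : 0 < ε' := lt_min (by positivity) (by norm_num)
  have hε'le : ε' ≤ 4⁻¹ := min_le_right _ _
  set εe : ℝ≥0∞ := ENNReal.ofReal ε' with hεedef
  -- tightness on the path component
  have hprojm : Measurable (fun p : Td d × ↥W × PathSp T => p.2.2) := measurable_snd.snd
  have hprojc : Continuous (fun p : Td d × ↥W × PathSp T => p.2.2) := continuous_snd.snd
  haveI : IsProbabilityMeasure
      ((Q : Measure (Td d × ↥W × PathSp T)).map (fun p => p.2.2)) :=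
    Measure.isProbabilityMeasure_map hprojm.aemeasurable
  obtain ⟨Kc, hKcomp, hKlt⟩ := tight_aux
    ((Q : Measure (Td d × ↥W × PathSp T)).map (fun p => p.2.2))
    (ENNReal.ofReal_pos.mpr hε'pos) ENNReal.ofReal_ne_top
  obtain ⟨r, hr, hreq⟩ := equicont_aux hKcomp hδpos
  set U : Set (Td d × ↥W × PathSp T) :=
    (fun p : Td d × ↥W × PathSp T => p.2.2) ⁻¹' (Metric.thickening δ Kc) with hUdef
  have hUopen : IsOpen U := (Metric.isOpen_thickening).preimage hprojc
  have hUmeas : MeasurableSet U := hUopen.measurableSet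
  have hQUc : (Q : Measure (Td d × ↥W × PathSp T)) Uᶜ < εe := by
    have h1 : (Q : Measure (Td d × ↥W × PathSp T)) Uᶜ =
        ((Q : Measure (Td d × ↥W × PathSp T)).map (fun p => p.2.2))
          (Metric.thickening δ Kc)ᶜ := by
      rw [Measure.map_apply hprojm (Metric.isOpen_thickening.measurableSet.compl)]
      rfl
    rw [h1]
    exact lt_of_le_of_lt (measure_mono (Set.compl_subset_compl.mpr
      (Metric.self_subset_thickening hδpos Kc))) hKlt
  -- the key equicontinuity estimate
  have key : ∀ P : ProbabilityMeasure (Td d × ↥W × PathSp T),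
      (P : Measure (Td d × ↥W × PathSp T)) Uᶜ ≤ 2 * εe →
      ∀ s t : ↥(Set.Icc (0 : ℝ) T), dist s t < r → dist (H P s) (H P t) ≤ ε / 4 := by
    intro P hP s t hst
    set ψ : Td d × ↥W × PathSp T → ℝ :=
      fun p => 3 * (K : ℝ) * δ + Uᶜ.indicator (fun _ => 2 * C') p with hψ
    have hψint : Integrable ψ (P : Measure (Td d × ↥W × PathSp T)) :=
      (integrable_const _).add ((integrable_const (2 * C')).indicator hUmeas.compl)
    have hpt : ∀ p : Td d × ↥W × PathSp T,
        ‖f (p.1, p.2.1, p.2.2 s) - f (p.1, p.2.1, p.2.2 t)‖ ≤ ψ p := by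
      intro p
      by_cases hp : p ∈ U
      · have hpU : p ∉ Uᶜ := fun hc => hc hp
        rw [hψ]
        simp only [Set.indicator_of_notMem hpU, add_zero]
        obtain ⟨η, hη, hdist⟩ := Metric.mem_thickening_iff.mp hp
        have h3δ : dist (p.2.2 s) (p.2.2 t) < 3 * δ := by
          have h1 : dist (p.2.2 s) (η s) < δ :=
            lt_of_le_of_lt (ContinuousMap.dist_apply_le_dist s) hdist
          have h2 : dist (η s) (η t) < δ := hreq η hη s t hst
          have h3 : dist (η t) (p.2.2 t) < δ := by
            rw [dist_comm]
            exact lt_of_le_of_lt (ContinuousMap.dist_apply_le_dist t) hdist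
          calc dist (p.2.2 s) (p.2.2 t)
              ≤ dist (p.2.2 s) (η s) + dist (η s) (η t) + dist (η t) (p.2.2 t) :=
                dist_triangle4 _ _ _ _
            _ < 3 * δ := by linarith
        have hlip := hfL.dist_le_mul (p.1, p.2.1, p.2.2 s) (p.1, p.2.1, p.2.2 t)
        have hdeq : dist ((p.1, p.2.1, p.2.2 s) : Td d × ↥W × ℝ) (p.1, p.2.1, p.2.2 t) =
            dist (p.2.2 s) (p.2.2 t) := by
          simp [Prod.dist_eq, dist_self, max_eq_right dist_nonneg]
        rw [hdeq] at hlip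
        have hne : ‖f (p.1, p.2.1, p.2.2 s) - f (p.1, p.2.1, p.2.2 t)‖ =
            dist (f (p.1, p.2.1, p.2.2 s)) (f (p.1, p.2.1, p.2.2 t)) := by
          rw [dist_eq_norm]
        rw [hne]
        calc dist (f (p.1, p.2.1, p.2.2 s)) (f (p.1, p.2.1, p.2.2 t))
            ≤ (K : ℝ) * dist (p.2.2 s) (p.2.2 t) := hlip
          _ ≤ (K : ℝ) * (3 * δ) := mul_le_mul_of_nonneg_left h3δ.le (K : ℝ≥0).coe_nonneg
          _ = 3 * (K : ℝ) * δ := by ring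
      · rw [hψ]
        simp only [Set.indicator_of_mem (Set.mem_compl hp)]
        have h1 : ‖f (p.1, p.2.1, p.2.2 s)‖ ≤ C := by simpa using hC _
        have h2 : ‖f (p.1, p.2.1, p.2.2 t)‖ ≤ C := by simpa using hC _
        have h3 : ‖f (p.1, p.2.1, p.2.2 s) - f (p.1, p.2.1, p.2.2 t)‖ ≤
            ‖f (p.1, p.2.1, p.2.2 s)‖ + ‖f (p.1, p.2.1, p.2.2 t)‖ := norm_sub_le _ _
        have h4 : (0 : ℝ) ≤ 3 * (K : ℝ) * δ := by positivity
        rw [hC'def]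
        linarith
    have hInt : dist (H P s) (H P t) ≤
        3 * (K : ℝ) * δ + 2 * C' * ((P : Measure (Td d × ↥W × PathSp T)) Uᶜ).toReal := by
      have e1 : dist (H P s) (H P t) =
          |∫ p, (f (p.1, p.2.1, p.2.2 s) - f (p.1, p.2.1, p.2.2 t))
            ∂(P : Measure (Td d × ↥W × PathSp T))| := by
        rw [Real.dist_eq, hH]
        rw [integral_sub (hint P s) (hint P t)]
      rw [e1]
      calc |∫ p, (f (p.1, p.2.1, p.2.2 s) - f (p.1, p.2.1, p.2.2 t))
            ∂(P : Measure (Td d × ↥W × PathSp T))|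
          ≤ ∫ p, ‖f (p.1, p.2.1, p.2.2 s) - f (p.1, p.2.1, p.2.2 t)‖
            ∂(P : Measure (Td d × ↥W × PathSp T)) := by
            rw [← Real.norm_eq_abs]
            exact norm_integral_le_integral_norm _
        _ ≤ ∫ p, ψ p ∂(P : Measure (Td d × ↥W × PathSp T)) :=
            integral_mono ((hint P s).sub (hint P t)).norm hψint hpt
        _ = 3 * (K : ℝ) * δ + 2 * C' * ((P : Measure (Td d × ↥W × PathSp T)) Uᶜ).toReal := by
            rw [hψ, integral_add (integrable_const _)
              ((integrable_const (2 * C')).indicator hUmeas.compl),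
              integral_const, integral_indicator_const _ hUmeas.compl]
            simp [measure_univ, smul_eq_mul]
            rw [← measureReal_def, ProbabilityMeasure.measureReal_eq_coe_coeFn]
            ring
    -- numerical bounds
    have h3Kδ : 3 * (K : ℝ) * δ ≤ ε / 8 := by
      have heq : 3 * (K : ℝ) * δ = ε / 8 * ((K : ℝ) / ((K : ℝ) + 1)) := by
        rw [hδdef]; field_simp; ring
      rw [heq]
      exact mul_le_of_le_one_right (by positivity)
        (div_le_one_of_le₀ (by linarith) hKpos.le)
    have htr : ((P : Measure (Td d × ↥W × PathSp T)) Uᶜ).toReal ≤ 2 * ε' := by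
      refine ENNReal.toReal_le_of_le_ofReal (by positivity) ?_
      calc (P : Measure (Td d × ↥W × PathSp T)) Uᶜ ≤ 2 * εe := hP
        _ = ENNReal.ofReal (2 * ε') := by
            rw [hεedef, ENNReal.ofReal_mul (by norm_num : (0 : ℝ) ≤ 2)]
            norm_num
    have h2C' : 2 * C' * ((P : Measure (Td d × ↥W × PathSp T)) Uᶜ).toReal ≤ ε / 8 := by
      calc 2 * C' * ((P : Measure (Td d × ↥W × PathSp T)) Uᶜ).toReal
          ≤ 2 * C' * (2 * ε') := mul_le_mul_of_nonneg_left htr (by positivity)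
        _ ≤ 2 * C' * (2 * (ε / (32 * C'))) := by
            have := min_le_left (ε / (32 * C')) (4⁻¹ : ℝ)
            nlinarith
        _ = ε / 8 := by field_simp; ring
    calc dist (H P s) (H P t) ≤ _ := hInt
      _ ≤ ε / 8 + ε / 8 := add_le_add h3Kδ h2C'
      _ = ε / 4 := by ring
  -- the good event: eventually `Qn n Uᶜ < 2 εe`
  have hεe14 : εe ≤ (4 : ℝ≥0∞)⁻¹ := by
    rw [hεedef]
    calc ENNReal.ofReal ε' ≤ ENNReal.ofReal (4⁻¹ : ℝ) := ENNReal.ofReal_le_ofReal hε'le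
      _ = (4 : ℝ≥0∞)⁻¹ := by
          rw [ENNReal.ofReal_inv_of_pos (by norm_num)]
          norm_num
  have h42 : (2 : ℝ≥0∞) * 4⁻¹ = 2⁻¹ := by
    have h4 : (4 : ℝ≥0∞) = 2 * 2 := by norm_num
    rw [h4, ENNReal.mul_inv (Or.inl (by norm_num)) (Or.inl ENNReal.ofNat_ne_top),
      ← mul_assoc, ENNReal.mul_inv_cancel (by norm_num) ENNReal.ofNat_ne_top, one_mul]
  have h2εe1 : 2 * εe ≤ 1 := by
    calc (2 : ℝ≥0∞) * εe ≤ 2 * 4⁻¹ := mul_le_mul_right hεe14 2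
      _ = 2⁻¹ := h42
      _ ≤ 1 := ENNReal.inv_le_one.mpr one_le_two
  have h2εetop : (2 : ℝ≥0∞) * εe ≠ ∞ :=
    ENNReal.mul_ne_top (by norm_num) ENNReal.ofReal_ne_top
  have hQU1 : (1 : ℝ≥0∞) - εe ≤ (Q : Measure (Td d × ↥W × PathSp T)) U := by
    rw [tsub_le_iff_right]
    have h := measure_add_measure_compl (μ := (Q : Measure (Td d × ↥W × PathSp T))) hUmeas
    rw [measure_univ] at h
    calc (1 : ℝ≥0∞) = _ + _ := h.symm
      _ ≤ (Q : Measure (Td d × ↥W × PathSp T)) U + εe := add_le_add le_rfl hQUc.le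
  have hliminf := ProbabilityMeasure.le_liminf_measure_open_of_tendsto hQn hUopen
  have hlt : (1 : ℝ≥0∞) - 2 * εe < 1 - εe := by
    have e1 : (1 : ℝ≥0∞) - 2 * εe = ENNReal.ofReal (1 - 2 * ε') := by
      rw [ENNReal.ofReal_sub _ (by positivity), ENNReal.ofReal_one, hεedef,
        ENNReal.ofReal_mul (by norm_num : (0 : ℝ) ≤ 2)]
      norm_num
    have e2 : (1 : ℝ≥0∞) - εe = ENNReal.ofReal (1 - ε') := by
      rw [ENNReal.ofReal_sub _ hε'pos.le, ENNReal.ofReal_one, hεedef]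
    rw [e1, e2]
    have hε'lt : ε' < 1 := lt_of_le_of_lt hε'le (by norm_num)
    exact (ENNReal.ofReal_lt_ofReal_iff (by linarith)).mpr (by linarith)
  have hgood : ∀ᶠ n in atTop,
      (Qn n : Measure (Td d × ↥W × PathSp T)) Uᶜ < 2 * εe := by
    have h1 : (1 : ℝ≥0∞) - 2 * εe <
        atTop.liminf (fun n => (Qn n : Measure (Td d × ↥W × PathSp T)) U) :=
      lt_of_lt_of_le (lt_of_lt_of_le hlt hQU1) hliminf
    filter_upwards [eventually_lt_of_lt_liminf h1] with n hn
    have hsum := measure_add_measure_compl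
      (μ := (Qn n : Measure (Td d × ↥W × PathSp T))) hUmeas
    rw [measure_univ] at hsum
    by_contra hcon
    push_neg at hcon
    have hcontr : (1 : ℝ≥0∞) < 1 := by
      calc (1 : ℝ≥0∞) = (1 - 2 * εe) + 2 * εe := (tsub_add_cancel_of_le h2εe1).symm
        _ < (Qn n : Measure (Td d × ↥W × PathSp T)) U + 2 * εe :=
            ENNReal.add_lt_add_right h2εetop hn
        _ ≤ (Qn n : Measure (Td d × ↥W × PathSp T)) U +
            (Qn n : Measure (Td d × ↥W × PathSp T)) Uᶜ := add_le_add le_rfl hcon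
        _ = 1 := hsum
    exact lt_irrefl _ hcontr
  -- finite net in time
  obtain ⟨net, hnet⟩ := isCompact_univ.elim_finite_subcover
    (fun c : ↥(Set.Icc (0 : ℝ) T) => Metric.ball c r) (fun _ => Metric.isOpen_ball)
    (fun x _ => Set.mem_iUnion.2 ⟨x, Metric.mem_ball_self hr⟩)
  have hE2 : ∀ᶠ n in atTop, ∀ c ∈ net, dist (H Q c) (H (Qn n) c) < ε / 4 := by
    rw [Filter.eventually_all_finset]
    intro c _
    have := (hptC c).eventually (Metric.ball_mem_nhds (H Q c) (by positivity : (0:ℝ) < ε / 4))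
    filter_upwards [this] with n hn
    rw [dist_comm]
    exact hn
  filter_upwards [hgood, hE2] with n hn1 hn2
  intro t
  have ht : t ∈ ⋃ c ∈ net, Metric.ball c r := hnet (Set.mem_univ t)
  obtain ⟨c, hc, htc⟩ := Set.mem_iUnion₂.mp ht
  have htc' : dist t c < r := Metric.mem_ball.mp htc
  have b1 : dist (H Q t) (H Q c) ≤ ε / 4 :=
    key Q (le_trans hQUc.le (le_mul_of_one_le_left (by positivity) one_le_two)) t c htc'
  have b2 : dist (H Q c) (H (Qn n) c) < ε / 4 := hn2 c hc
  have b3 : dist (H (Qn n) c) (H (Qn n) t) ≤ ε / 4 := by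
    refine key (Qn n) hn1.le c t ?_
    rw [dist_comm]
    exact htc'
  calc dist (H Q t) (H (Qn n) t)
      ≤ dist (H Q t) (H Q c) + dist (H Q c) (H (Qn n) c) + dist (H (Qn n) c) (H (Qn n) t) :=
        dist_triangle4 _ _ _ _
    _ < ε := by linarith


end PaperPath
end
end
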